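/- Let γ be a unit-speed Frenet curve with curvature κ > 0 and torsion τ, and let β be the integral curve of X = xT + yN + zB with x² + y² + z² = 1. If the principal normal of β equals T (evolute condition, i.e., β'' is a nonzero multiple of T), then x ≡ 0, y(s) = sin(∫τ ds), and z(s) = cos(∫τ ds) (up to the choice of integration constant). -/

import Mathlib

open Real

/-- evolute condition forces `x ≡ 0`, `y = sin(∫τ)`, `z = cos(∫τ)`. -/
theorem evolute_direction_coefficients
    (κ τ x y z x' y' z' : ℝ → ℝ)
    (hκ : ∀ s, 0 < κ s)
    (hx : ∀ s, HasDerivAt x (x' s) s)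
    (hy : ∀ s, HasDerivAt y (y' s) s)
    (hz : ∀ s, HasDerivAt z (z' s) s)
    (hunit : ∀ s, x s ^ 2 + y s ^ 2 + z s ^ 2 = 1)
    (hev1 : ∀ s, y' s + x s * κ s - z s * τ s = 0)
    (hev2 : ∀ s, z' s + y s * τ s = 0)
    (hev3 : ∀ s, x' s - y s * κ s ≠ 0) :
    (∀ s, x s = 0) ∧
      ∃ θ : ℝ → ℝ, (∀ s, HasDerivAt θ (τ s) s) ∧
        ∀ s, y s = sin (θ s) ∧ z s = cos (θ s) := by
  -- differentiating the unit-norm condition gives x ≡ 0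
  have hx0 : ∀ s, x s = 0 := by
    intro s
    have hF : HasDerivAt (fun t => x t ^ 2 + y t ^ 2 + z t ^ 2)
        (2 * x s * x' s + 2 * y s * y' s + 2 * z s * z' s) s := by
      have := (((hx s).pow 2).add ((hy s).pow 2)).add ((hz s).pow 2)
      refine this.congr_deriv (Eq.symm ?_)
      push_cast
      ring
    have hF1 : (fun t => x t ^ 2 + y t ^ 2 + z t ^ 2) = fun _ : ℝ => (1 : ℝ) :=
      funext hunit
    have h0 : (2 * x s * x' s + 2 * y s * y' s + 2 * z s * z' s) = 0 := by
      have := hF.unique (hF1 ▸ hasDerivAt_const s (1 : ℝ))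
      simpa using this
    have key : 2 * x s * (x' s - y s * κ s) = 0 := by
      linear_combination h0 - 2 * y s * hev1 s - 2 * z s * hev2 s
    rcases mul_eq_zero.mp key with h | h
    · linarith
    · exact absurd h (hev3 s)
  -- consequently x' ≡ 0
  have hx'0 : ∀ s, x' s = 0 := by
    intro s
    have : HasDerivAt x 0 s := by
      have : x = fun _ : ℝ => (0 : ℝ) := funext hx0
      rw [this]; exact hasDerivAt_const s 0
    exact (hx s).unique this
  -- y never vanishes
  have hyne : ∀ s, y s ≠ 0 := by
    intro s hys
    apply hev3 s
    rw [hx'0 s, hys]; ring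
  -- y² + z² = 1
  have hyz : ∀ s, y s ^ 2 + z s ^ 2 = 1 := by
    intro s
    have := hunit s
    rw [hx0 s] at this
    linarith
  have hzlt : ∀ s, z s ≠ -1 ∧ z s ≠ 1 := by
    intro s
    have h := hyz s
    have hy2 : 0 < y s ^ 2 := pow_two_pos_of_ne_zero (hyne s)
    constructor <;> intro hzs <;> rw [hzs] at h <;> nlinarith
  have hzle : ∀ s, -1 ≤ z s ∧ z s ≤ 1 := by
    intro s
    have h := hyz s
    have hy2 : 0 ≤ y s ^ 2 := sq_nonneg _
    constructor <;> nlinarith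
  have hycont : Continuous y := continuous_iff_continuousAt.mpr fun t => (hy t).continuousAt
  -- y has constant sign
  have hsign : (∀ s, 0 < y s) ∨ (∀ s, y s < 0) := by
    rcases (hyne 0).lt_or_gt with h0 | h0
    · right
      intro s
      by_contra hcon
      have hs : 0 < y s := lt_of_le_of_ne (not_lt.mp hcon) (Ne.symm (hyne s))
      have : (0 : ℝ) ∈ Set.uIcc (y 0) (y s) := Set.mem_uIcc.mpr (Or.inl ⟨le_of_lt h0, le_of_lt hs⟩)
      obtain ⟨t, _, ht⟩ := intermediate_value_uIcc (hycont.continuousOn (s := Set.uIcc 0 s)) this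
      exact hyne t ht
    · left
      intro s
      by_contra hcon
      have hs : y s < 0 := lt_of_le_of_ne (not_lt.mp hcon) (hyne s)
      have : (0 : ℝ) ∈ Set.uIcc (y 0) (y s) := Set.mem_uIcc.mpr (Or.inr ⟨le_of_lt hs, le_of_lt h0⟩)
      obtain ⟨t, _, ht⟩ := intermediate_value_uIcc (hycont.continuousOn (s := Set.uIcc 0 s)) this
      exact hyne t ht
  refine ⟨hx0, ?_⟩
  have hsqrt_pos : ∀ s, 0 < y s → Real.sqrt (1 - z s ^ 2) = y s := by
    intro s hs
    have : 1 - z s ^ 2 = y s ^ 2 := by linarith [hyz s]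
    rw [this, Real.sqrt_sq hs.le]
  have hsqrt_neg : ∀ s, y s < 0 → Real.sqrt (1 - z s ^ 2) = -y s := by
    intro s hs
    have : 1 - z s ^ 2 = (-y s) ^ 2 := by nlinarith [hyz s]
    rw [this, Real.sqrt_sq (by linarith)]
  rcases hsign with hpos | hneg
  · refine ⟨fun s => Real.arccos (z s), fun s => ?_, fun s => ?_⟩
    · have hd := (Real.hasDerivAt_arccos (hzlt s).1 (hzlt s).2).comp s (hz s)
      have hz' : z' s = -(y s * τ s) := by linarith [hev2 s]
      refine hd.congr_deriv (Eq.symm ?_)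
      rw [hsqrt_pos s (hpos s), hz']
      field_simp [hyne s]
    · constructor
      · rw [Real.sin_arccos, hsqrt_pos s (hpos s)]
      · rw [Real.cos_arccos (hzle s).1 (hzle s).2]
  · refine ⟨fun s => -Real.arccos (z s), fun s => ?_, fun s => ?_⟩
    · have hd := ((Real.hasDerivAt_arccos (hzlt s).1 (hzlt s).2).comp s (hz s)).neg
      have hz' : z' s = -(y s * τ s) := by linarith [hev2 s]
      have hyne' : -y s ≠ 0 := by simpa using hyne s
      refine hd.congr_deriv (Eq.symm ?_)
      rw [hsqrt_neg s (hneg s), hz']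
      field_simp [hyne s]
    · constructor
      · rw [Real.sin_neg, Real.sin_arccos, hsqrt_neg s (hneg s)]; ring
      · rw [Real.cos_neg, Real.cos_arccos (hzle s).1 (hzle s).2]
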